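/- Let (X,d) be a ν-generalized metric space and {x_n} a sequence in X whose terms are pairwise distinct. Suppose that for every ε > 0 and for any two subsequences {x_{p_i}}, {x_{q_i}}, if limsup_{i→∞} d(x_{p_i}, x_{q_i}) ≤ ε then there exists N such that d(x_{p_i+1}, x_{q_i+1}) ≤ ε for all i ≥ N. If d(x_n, x_{n+1}) → 0, then {x_n} is ν-Cauchy. -/
import Mathlib


open Filter Topology

/-- `(X,d)` is a ν-generalized metric space. -/
def NuGenMetric (ν : ℕ) {X : Type*} (d : X → X → ℝ) : Prop :=
  (∀ x y, 0 ≤ d x y) ∧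
  (∀ x y, d x y = 0 ↔ x = y) ∧
  (∀ x y, d x y = d y x) ∧
  (∀ u : Fin (ν + 2) → X, Function.Injective u →
    d (u 0) (u (Fin.last (ν + 1))) ≤ ∑ i : Fin (ν + 1), d (u i.castSucc) (u i.succ))

/-- `{x n}` is `k`-Cauchy: `lim_n sup_m d(x_n, x_{n+1+mk}) = 0` (sup taken in `[0,∞]`). -/
def IsKCauchy {X : Type*} (d : X → X → ℝ) (x : ℕ → X) (k : ℕ) : Prop :=
  Filter.Tendsto (fun n => ⨆ m : ℕ, ENNReal.ofReal (d (x n) (x (n + 1 + m * k))))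
    Filter.atTop (nhds 0)

lemma aux_poly {X : Type*} (ν : ℕ) (hν : 0 < ν) (d : X → X → ℝ)
    (hpoly : ∀ u : Fin (ν + 2) → X, Function.Injective u →
      d (u 0) (u (Fin.last (ν + 1))) ≤ ∑ i : Fin (ν + 1), d (u i.castSucc) (u i.succ))
    (x : ℕ → X) (hinj : Function.Injective x) (n m' : ℕ) (c r : ℝ)
    (hsmall : ∀ k, n ≤ k → d (x k) (x (k + 1)) ≤ c)
    (hb : d (x (n + 1)) (x (n + 2 + m' * ν)) ≤ r) :
    d (x n) (x (n + 1 + (m' + 1) * ν)) ≤ r + ν * c := by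
  rw [add_mul, one_mul]
  set K := m' * ν with hK
  set g : ℕ → ℕ := fun i => if i = 0 then n else if i = 1 then n + 1 else n + i + K with hg
  have hgmono : StrictMono g := by
    apply strictMono_nat_of_lt_succ
    intro i
    rcases i with _ | _ | j <;> simp [hg] <;> omega
  set u : Fin (ν + 2) → X := fun i => x (g i.val) with hu
  have huinj : Function.Injective u := by
    intro a b hab
    exact Fin.ext (hgmono.injective (hinj hab))
  have h := hpoly u huinj
  have e0 : u 0 = x n := by simp [hu, hg]
  have elast : u (Fin.last (ν + 1)) = x (n + 1 + (K + ν)) := by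
    have : g (ν + 1) = n + 1 + (K + ν) := by
      simp only [hg]
      rw [if_neg (by omega), if_neg (by omega)]
      omega
    simp [hu, Fin.last, this]
  rw [e0, elast] at h
  have hterm : ∀ i : Fin (ν + 1),
      d (u i.castSucc) (u i.succ) ≤ (if (i : ℕ) = 1 then r else c) := by
    intro i
    have hval : d (u i.castSucc) (u i.succ) = d (x (g i.val)) (x (g (i.val + 1))) := by
      simp [hu, Fin.coe_castSucc, Fin.val_succ]
    rw [hval]
    rcases i with ⟨iv, hiv⟩
    rcases iv with _ | _ | j
    · norm_num [hg]
      exact hsmall n le_rfl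
    · norm_num [hg]
      exact hb
    · have hne1 : ¬ (j + 2 = 1) := by omega
      have hne0 : ¬ (j + 2 = 0) := by omega
      have hne1' : ¬ (j + 2 + 1 = 1) := by omega
      have hne0' : ¬ (j + 2 + 1 = 0) := by omega
      simp only [hg, if_neg hne0, if_neg hne1, if_neg hne0', if_neg hne1']
      have e2 : n + (j + 2 + 1) + K = (n + (j + 2) + K) + 1 := by omega
      rw [e2]
      exact hsmall _ (by omega)
  have hsum : ∑ i : Fin (ν + 1), (if (i : ℕ) = 1 then r else c) = r + ν * c := by
    have h2 : (1 : ℕ) < ν + 1 := by omega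
    have hcong : ∀ i : Fin (ν + 1),
        (if (i : ℕ) = 1 then r else c) = c + (if i = ⟨1, h2⟩ then r - c else 0) := by
      intro i
      by_cases hh : (i : ℕ) = 1
      · rw [if_pos hh, if_pos (Fin.ext hh)]; ring
      · rw [if_neg hh, if_neg (fun hcon => hh (by rw [hcon]))]; ring
    rw [Finset.sum_congr rfl (fun i _ => hcong i), Finset.sum_add_distrib, Finset.sum_const,
      Finset.sum_ite_eq' Finset.univ (⟨1, h2⟩ : Fin (ν + 1)) (fun _ => r - c)]
    simp [Finset.card_univ]
    push_cast
    ring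
  calc d (x n) (x (n + 1 + (K + ν)))
      ≤ ∑ i : Fin (ν + 1), d (u i.castSucc) (u i.succ) := h
    _ ≤ ∑ i : Fin (ν + 1), (if (i : ℕ) = 1 then r else c) :=
        Finset.sum_le_sum (fun i _ => hterm i)
    _ = r + ν * c := hsum

theorem stmt_0 {X : Type*} (ν : ℕ) (hν : 0 < ν) (d : X → X → ℝ)
    (hX : NuGenMetric ν d) (x : ℕ → X) (hinj : Function.Injective x)
    (hsub : ∀ ε > (0 : ℝ), ∀ p q : ℕ → ℕ, StrictMono p → StrictMono q →
      Filter.limsup (fun i => ENNReal.ofReal (d (x (p i)) (x (q i)))) Filter.atTop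
        ≤ ENNReal.ofReal ε →
      ∃ N, ∀ i ≥ N, d (x (p i + 1)) (x (q i + 1)) ≤ ε)
    (hd : Filter.Tendsto (fun n => d (x n) (x (n + 1))) Filter.atTop (nhds 0)) :
    IsKCauchy d x ν := by
  classical
  obtain ⟨hnonneg, heq, hsymm, hpoly⟩ := hX
  have h1 : ∀ δ : ℝ, 0 < δ → ∃ N, ∀ k ≥ N, d (x k) (x (k + 1)) ≤ δ := by
    intro δ hδ
    have := hd.eventually (eventually_le_nhds hδ)
    exact eventually_atTop.mp this
  have main : ∀ r : ℝ, 0 < r → ∃ N, ∀ n ≥ N, ∀ m : ℕ, d (x n) (x (n + 1 + m * ν)) ≤ r := by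
    intro r hr
    by_contra hcon
    push_neg at hcon
    obtain ⟨N0, hN0⟩ := h1 r hr
    have hcon' : ∀ N : ℕ, ∃ n, N ≤ n ∧ ∃ m, r < d (x n) (x (n + 1 + m * ν)) := by
      intro N; obtain ⟨n, hn, m, hm⟩ := hcon N; exact ⟨n, hn, m, hm⟩
    choose f hf1 hf2 using hcon'
    set Ns : ℕ → ℕ :=
      fun i => Nat.rec (N0 + 1) (fun _ prev => f prev + Nat.find (hf2 prev) * ν + 1) i with hNs
    set nn : ℕ → ℕ := fun i => f (Ns i) with hnn
    set mm : ℕ → ℕ := fun i => Nat.find (hf2 (Ns i)) with hmm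
    have hNsS : ∀ i, Ns (i + 1) = nn i + mm i * ν + 1 := fun i => rfl
    have hge : ∀ i, Ns i ≤ nn i := fun i => hf1 (Ns i)
    have hspec : ∀ i, r < d (x (nn i)) (x (nn i + 1 + mm i * ν)) :=
      fun i => Nat.find_spec (hf2 (Ns i))
    have hmin : ∀ i, ∀ m, m < mm i → d (x (nn i)) (x (nn i + 1 + m * ν)) ≤ r :=
      fun i m hm => not_lt.mp (Nat.find_min (hf2 (Ns i)) hm)
    have hNslb : ∀ i, N0 + 1 ≤ Ns i := by
      intro i
      induction i with
      | zero => exact le_refl _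
      | succ i ih =>
        rw [hNsS]
        calc N0 + 1 ≤ nn i := le_trans ih (hge i)
          _ ≤ nn i + mm i * ν + 1 := by
            exact le_trans (Nat.le_add_right _ _) (Nat.le_succ _)
    have hnnlb : ∀ i, N0 + 1 ≤ nn i := fun i => le_trans (hNslb i) (hge i)
    have hmm1 : ∀ i, 1 ≤ mm i := by
      intro i
      by_contra h
      have h0 : mm i = 0 := by omega
      have hs := hspec i
      rw [h0] at hs
      norm_num at hs
      have h2 := hN0 (nn i) (by have := hnnlb i; omega)
      linarith
    have hnnmono : ∀ i, nn i < nn (i + 1) := by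
      intro i
      have h1' := hge (i + 1)
      rw [hNsS] at h1'
      calc nn i < nn i + mm i * ν + 1 := Nat.lt_succ_of_le (Nat.le_add_right _ _)
        _ ≤ nn (i + 1) := h1'
    set p : ℕ → ℕ := fun i => nn i - 1 with hp
    set q : ℕ → ℕ := fun i => nn i + mm i * ν with hq
    have hpmono : StrictMono p := by
      apply strictMono_nat_of_lt_succ
      intro i
      have h2 := hnnmono i
      have h3 := hnnlb i
      simp only [hp]
      omega
    have hqmono : StrictMono q := by
      apply strictMono_nat_of_lt_succ
      intro i
      have h1' := hge (i + 1)
      rw [hNsS] at h1'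
      calc q i < nn i + mm i * ν + 1 := Nat.lt_succ_self _
        _ ≤ nn (i + 1) := h1'
        _ ≤ nn (i + 1) + mm (i + 1) * ν := Nat.le_add_right _ _
    have hlimsup : Filter.limsup (fun i => ENNReal.ofReal (d (x (p i)) (x (q i))))
        Filter.atTop ≤ ENNReal.ofReal r := by
      apply ENNReal.le_of_forall_pos_le_add
      intro ε hε _
      have hc : (0 : ℝ) < ε / ν := by positivity
      obtain ⟨N1, hN1⟩ := h1 (ε / ν) hc
      have hev : ∀ᶠ i in atTop,
          ENNReal.ofReal (d (x (p i)) (x (q i))) ≤ ENNReal.ofReal r + (ε : ENNReal) := by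
        rw [eventually_atTop]
        refine ⟨N1 + 1, fun i hi => ?_⟩
        have hile : i ≤ nn i := (strictMono_nat_of_lt_succ hnnmono).le_apply
        have hn1 : N1 + 1 ≤ nn i := le_trans hi hile
        obtain ⟨a, ha⟩ : ∃ a, nn i = a + 1 := ⟨nn i - 1, by have := hnnlb i; omega⟩
        obtain ⟨m', hm'⟩ : ∃ m', mm i = m' + 1 := ⟨mm i - 1, by have := hmm1 i; omega⟩
        have hsmall : ∀ k, a ≤ k → d (x k) (x (k + 1)) ≤ ε / ν :=
          fun k hk => hN1 k (by omega)
        have hb : d (x (a + 1)) (x (a + 2 + m' * ν)) ≤ r := by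
          have hm := hmin i m' (by omega)
          rw [ha] at hm
          exact hm
        have hkey := aux_poly ν hν d hpoly x hinj a m' (ε / ν) r hsmall hb
        have ep : p i = a := by simp only [hp]; omega
        have eq' : q i = a + 1 + (m' + 1) * ν := by
          simp only [hq, ha, hm']
        rw [ep, eq']
        have hεν : (ν : ℝ) * (ε / ν) = ε := by
          field_simp
        rw [hεν] at hkey
        calc ENNReal.ofReal (d (x a) (x (a + 1 + (m' + 1) * ν)))
            ≤ ENNReal.ofReal (r + ε) := ENNReal.ofReal_le_ofReal hkey
          _ = ENNReal.ofReal r + ENNReal.ofReal ε :=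
              ENNReal.ofReal_add (le_of_lt hr) ε.coe_nonneg
          _ = ENNReal.ofReal r + (ε : ENNReal) := by rw [ENNReal.ofReal_coe_nnreal]
      exact limsup_le_of_le (by isBoundedDefault) hev
    obtain ⟨N2, hN2⟩ := hsub r hr p q hpmono hqmono hlimsup
    have h3 := hN2 N2 le_rfl
    have h4 := hspec N2
    have e1 : p N2 + 1 = nn N2 := by
      have := hnnlb N2; simp only [hp]; omega
    have e2 : q N2 + 1 = nn N2 + 1 + mm N2 * ν := by
      simp only [hq]; ring
    rw [e1, e2] at h3
    linarith
  rw [IsKCauchy, ENNReal.tendsto_atTop_zero]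
  intro ε hε
  have hmin_ne_top : min ε 1 ≠ ⊤ := by
    exact ne_of_lt (lt_of_le_of_lt (min_le_right _ _) (by norm_num))
  have hmin_ne_zero : min ε 1 ≠ 0 := (lt_min hε (by norm_num)).ne'
  have hrpos : 0 < (min ε 1).toReal := ENNReal.toReal_pos hmin_ne_zero hmin_ne_top
  obtain ⟨N, hN⟩ := main _ hrpos
  refine ⟨N, fun n hn => ?_⟩
  refine iSup_le fun m => ?_
  calc ENNReal.ofReal (d (x n) (x (n + 1 + m * ν)))
      ≤ ENNReal.ofReal ((min ε 1).toReal) := ENNReal.ofReal_le_ofReal (hN n hn m)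
    _ = min ε 1 := ENNReal.ofReal_toReal hmin_ne_top
    _ ≤ ε := min_le_left _ _
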